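/- (Necessity for SD-EF1) Let A be an allocation of a finite set of goods S among n agents with additive nonnegative valuations. If A is SD-EF1, then for every agent i and every r ∈ [|S|] such that v_i(g) > v_i(g') for all g ∈ T_i(S,r) and g' ∈ S \ T_i(S,r), it holds that |A_i ∩ T_i(S,r)| ≥ ⌊r/n⌋. -/
import Mathlib


open Finset
open scoped Classical

noncomputable section

/-- `A` is an allocation of the set of goods `S` among `n` agents. -/
def IsAlloc {G : Type*} (n : ℕ) (S : Finset G) (A : Fin n → Finset G) : Prop :=
  (∀ i j : Fin n, i ≠ j → Disjoint (A i) (A j)) ∧ Finset.univ.biUnion A = S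

/-- The top-set `H_i(S,g) = {g' ∈ S : v g' ≥ v g}`. -/
def topSet {G : Type*} (v : G → ℝ) (S : Finset G) (g : G) : Finset G :=
  S.filter (fun g' => v g ≤ v g')

/-- Stochastic dominance: `X ≽^SD Y` w.r.t. valuation `v` over the set of goods `S`. -/
def SDge {G : Type*} [DecidableEq G] (v : G → ℝ) (S X Y : Finset G) : Prop :=
  ∀ g ∈ S, (Y ∩ topSet v S g).card ≤ (X ∩ topSet v S g).card

/-- The allocation `A` of goods `S` is SD-EF1. -/
def SDEF1 {G : Type*} [DecidableEq G] (n : ℕ) (v : Fin n → G → ℝ) (S : Finset G)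
    (A : Fin n → Finset G) : Prop :=
  ∀ i j : Fin n, A j ≠ ∅ → ∃ g ∈ A j, SDge (v i) S (A i) ((A j).erase g)

/-- **Necessity for SD-EF1.** If the allocation `A` of `S` is SD-EF1, then
for every agent `i` and every `r ∈ [|S|]` such that the top `r` goods `T = T_i(S,r)` are
all strictly more valuable (to `i`) than every good of `S \ T`, we have
`|A i ∩ T| ≥ ⌊r/n⌋`.  (Under the strict-separation condition, `T_i(S,r)` is the unique
`T ⊆ S` with `|T| = r` whose goods strictly dominate `S \ T`, independently of the
tie-breaking order.) -/
theorem topPrefix_condition_of_sdef1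
    {G : Type*} [DecidableEq G] (n : ℕ) (hn : 0 < n)
    (S : Finset G) (v : Fin n → G → ℝ)
    (hv : ∀ i : Fin n, ∀ g ∈ S, 0 ≤ v i g)
    (A : Fin n → Finset G) (hA : IsAlloc n S A)
    (hsd : SDEF1 n v S A) :
    ∀ i : Fin n, ∀ r ∈ Finset.Icc 1 S.card, ∀ T ⊆ S, T.card = r →
      (∀ g ∈ T, ∀ g' ∈ S \ T, v i g' < v i g) →
      r / n ≤ (A i ∩ T).card := by
  intro i r hr T hTS hTr hdom
  obtain ⟨hr1, hrS⟩ := Finset.mem_Icc.mp hr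
  have hTne : T.Nonempty := Finset.card_pos.mp (by omega)
  obtain ⟨g₀, hg₀T, hg₀min⟩ := T.exists_min_image (v i) hTne
  have hg₀S : g₀ ∈ S := hTS hg₀T
  have htop : topSet (v i) S g₀ = T := by
    ext g'
    simp only [topSet, Finset.mem_filter]
    constructor
    · rintro ⟨hgS, hle⟩
      by_contra hgT
      exact absurd hle (not_le.mpr (hdom g₀ hg₀T g' (Finset.mem_sdiff.mpr ⟨hgS, hgT⟩)))
    · intro hgT
      exact ⟨hTS hgT, hg₀min g' hgT⟩
  set c := (A i ∩ T).card with hc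
  have key : ∀ j : Fin n, (A j ∩ T).card ≤ c + 1 := by
    intro j
    by_cases hj : A j = ∅
    · simp [hj]
    · obtain ⟨g, hgAj, hsdle⟩ := hsd i j hj
      have h1 := hsdle g₀ hg₀S
      rw [htop] at h1
      have hsub : A j ∩ T ⊆ insert g ((A j).erase g ∩ T) := by
        intro x hx
        rcases Finset.mem_inter.mp hx with ⟨hxA, hxT⟩
        by_cases hxg : x = g
        · simp [hxg]
        · exact Finset.mem_insert_of_mem
            (Finset.mem_inter.mpr ⟨Finset.mem_erase.mpr ⟨hxg, hxA⟩, hxT⟩)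
      have h2 : (A j ∩ T).card ≤ ((A j).erase g ∩ T).card + 1 :=
        le_trans (Finset.card_le_card hsub) (Finset.card_insert_le _ _)
      omega
  have hdisj : ∀ a ∈ (Finset.univ : Finset (Fin n)), ∀ b ∈ Finset.univ, a ≠ b →
      Disjoint (A a ∩ T) (A b ∩ T) := by
    intro a _ b _ hab
    exact ((hA.1 a b hab).mono Finset.inter_subset_left Finset.inter_subset_left)
  have hbi : Finset.univ.biUnion (fun j => A j ∩ T) = T := by
    ext x
    simp only [Finset.mem_biUnion, Finset.mem_univ, true_and, Finset.mem_inter]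
    constructor
    · rintro ⟨j, _, hxT⟩; exact hxT
    · intro hxT
      have hxS : x ∈ S := hTS hxT
      simp only [← hA.2, Finset.mem_biUnion, Finset.mem_univ, true_and] at hxS
      obtain ⟨j, hxA⟩ := hxS
      exact ⟨j, hxA, hxT⟩
  have hcard := Finset.card_biUnion hdisj
  rw [hbi] at hcard
  have hsum : ∑ j : Fin n, (A j ∩ T).card = r := hcard.symm.trans hTr
  have hmemi : i ∈ (Finset.univ : Finset (Fin n)) := Finset.mem_univ i
  have hsplit : c + ∑ j ∈ Finset.univ.erase i, (A j ∩ T).card = r := by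
    rw [← hsum, hc]
    exact Finset.add_sum_erase Finset.univ (fun j => (A j ∩ T).card) hmemi
  have hrest : ∑ j ∈ Finset.univ.erase i, (A j ∩ T).card ≤ (n - 1) * (c + 1) := by
    calc ∑ j ∈ Finset.univ.erase i, (A j ∩ T).card
        ≤ ∑ j ∈ Finset.univ.erase i, (c + 1) :=
          Finset.sum_le_sum (fun j _ => key j)
      _ = (n - 1) * (c + 1) := by
          rw [Finset.sum_const, Finset.card_erase_of_mem hmemi, Finset.card_univ,
            Fintype.card_fin, smul_eq_mul]
  have hlt : r < (c + 1) * n := by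
    have h3 : (n - 1) * (c + 1) + (c + 1) = n * (c + 1) := by
      have : n - 1 + 1 = n := Nat.succ_pred_eq_of_pos hn
      calc (n - 1) * (c + 1) + (c + 1) = (n - 1 + 1) * (c + 1) := by ring
        _ = n * (c + 1) := by rw [this]
    have h4 : n * (c + 1) = (c + 1) * n := Nat.mul_comm _ _
    omega
  exact Nat.lt_succ_iff.mp ((Nat.div_lt_iff_lt_mul hn).mpr hlt)
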